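/- Let n ≥ 1, B an n×n symmetric positive definite matrix, s : ℝⁿ → ℝⁿ decreasing in the monotone-operator sense (⟨s(p) − s(q), p − q⟩ ≤ 0 for all p, q), and p* ∈ ℝⁿ with B·s(p*) = p*. Let p : ℝ → ℝⁿ be differentiable with p'(t) = B·s(p(t)) − p(t) for all t ≥ 0, and define V(q) = ½⟨q − p*, B⁻¹(q − p*)⟩. Then V(p(t)) ≤ e^{−2t}·V(p(0)) for all t ≥ 0, and p(t) → p* as t → ∞. -/

import Mathlib

open Filter Matrix

lemma quad_hasDerivAt {n : ℕ} (A : Matrix (Fin n) (Fin n) ℝ)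
    (u : ℝ → Fin n → ℝ) (u' : Fin n → ℝ) (t : ℝ) (hu : HasDerivAt u u' t) :
    HasDerivAt (fun τ => u τ ⬝ᵥ A.mulVec (u τ))
      (u' ⬝ᵥ A.mulVec (u t) + u t ⬝ᵥ A.mulVec u') t := by
  have hc : ∀ i, HasDerivAt (fun τ => u τ i) (u' i) t := hasDerivAt_pi.mp hu
  have h : ∀ i ∈ Finset.univ, HasDerivAt (fun τ => u τ i * ∑ j, A i j * u τ j)
      (u' i * ∑ j, A i j * u t j + u t i * ∑ j, A i j * u' j) t := by
    intro i _
    exact (hc i).mul (HasDerivAt.fun_sum fun j _ => (hc j).const_mul (A i j))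
  have hsum := HasDerivAt.fun_sum h
  have e1 : (fun τ => u τ ⬝ᵥ A.mulVec (u τ)) =
      fun τ => ∑ i, u τ i * ∑ j, A i j * u τ j := by
    funext τ; simp [dotProduct, Matrix.mulVec]
  rw [e1]
  refine hsum.congr_deriv ?_
  simp [dotProduct, Matrix.mulVec, Finset.sum_add_distrib]

lemma dot_symm {n : ℕ} {A : Matrix (Fin n) (Fin n) ℝ} (hA : Aᵀ = A)
    (x y : Fin n → ℝ) : x ⬝ᵥ A.mulVec y = y ⬝ᵥ A.mulVec x := by
  rw [Matrix.dotProduct_mulVec, ← Matrix.mulVec_transpose, hA, dotProduct_comm]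

lemma posdef_coercive {n : ℕ} (hn : 1 ≤ n) {A : Matrix (Fin n) (Fin n) ℝ}
    (hA : A.PosDef) : ∃ c > 0, ∀ x : Fin n → ℝ, c * ‖x‖ ^ 2 ≤ x ⬝ᵥ A.mulVec x := by
  set f : (Fin n → ℝ) → ℝ := fun x => x ⬝ᵥ A.mulVec x with hf
  have hcont : Continuous f := by
    have : f = fun x => ∑ i, x i * ∑ j, A i j * x j := by
      funext x; simp [hf, dotProduct, Matrix.mulVec]
    rw [this]
    exact continuous_finset_sum _ fun i _ => (continuous_apply i).mul
      (continuous_finset_sum _ fun j _ => continuous_const.mul (continuous_apply j))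
  have hne : (Metric.sphere (0 : Fin n → ℝ) 1).Nonempty := by
    refine ⟨Pi.single ⟨0, hn⟩ 1, ?_⟩
    simp [Pi.norm_single]
  obtain ⟨x₀, hx₀, hmin⟩ := (isCompact_sphere (0 : Fin n → ℝ) 1).exists_isMinOn hne
    hcont.continuousOn
  have hx₀norm : ‖x₀‖ = 1 := by simpa using mem_sphere_zero_iff_norm.mp hx₀
  have hx₀ne : x₀ ≠ 0 := by intro h; rw [h] at hx₀norm; simp at hx₀norm
  have hc : 0 < f x₀ := by
    have := hA.dotProduct_mulVec_pos hx₀ne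
    simpa [hf] using this
  refine ⟨f x₀, hc, fun x => ?_⟩
  rcases eq_or_ne x 0 with rfl | hx
  · simp [hf]
  · set a : ℝ := ‖x‖⁻¹ with ha
    have hxn : (0:ℝ) < ‖x‖ := norm_pos_iff.mpr hx
    have hmem : a • x ∈ Metric.sphere (0 : Fin n → ℝ) 1 := by
      simp [mem_sphere_zero_iff_norm, norm_smul, ha, abs_of_pos (inv_pos.mpr hxn),
        inv_mul_cancel₀ hxn.ne']
    have hle : f x₀ ≤ f (a • x) := hmin hmem
    have hfs : f (a • x) = a * (a * f x) := by
      simp only [hf, Matrix.mulVec_smul, smul_dotProduct, dotProduct_smul, smul_eq_mul]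
    rw [hfs] at hle
    have h2 : f x₀ * ‖x‖ ^ 2 ≤ a * (a * f x) * ‖x‖ ^ 2 :=
      mul_le_mul_of_nonneg_right hle (by positivity)
    calc f x₀ * ‖x‖ ^ 2 ≤ a * (a * f x) * ‖x‖ ^ 2 := h2
      _ = f x := by
        rw [ha]
        field_simp

/-- Theorem 2, case 1 (quadratic aggregate cost `g(z) = ½ zᵀBz`): with `B` symmetric
positive definite, `s` decreasing in the monotone-operator sense, and equilibrium
`p* = B·s(p*)`, the Lyapunov function `V(q) = ½⟨q - p*, B⁻¹(q - p*)⟩` decays exponentially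
along the dynamics `ṗ = B·s(p) - p`, and `p(t) → p*` as `t → ∞`. -/
theorem quadratic_lyapunov_exp_decay
    (n : ℕ) (hn : 1 ≤ n)
    (B : Matrix (Fin n) (Fin n) ℝ) (hBsymm : B.IsSymm) (hBpos : B.PosDef)
    (s : (Fin n → ℝ) → (Fin n → ℝ))
    (hdec : ∀ p q : Fin n → ℝ, (s p - s q) ⬝ᵥ (p - q) ≤ 0)
    (pstar : Fin n → ℝ) (hfix : B.mulVec (s pstar) = pstar)
    (p : ℝ → (Fin n → ℝ)) (hdiff : Differentiable ℝ p)
    (hode : ∀ t : ℝ, 0 ≤ t → deriv p t = B.mulVec (s (p t)) - p t)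
    (V : (Fin n → ℝ) → ℝ)
    (hV : ∀ q : Fin n → ℝ, V q = (1 / 2) * ((q - pstar) ⬝ᵥ B⁻¹.mulVec (q - pstar))) :
    (∀ t : ℝ, 0 ≤ t → V (p t) ≤ Real.exp (-2 * t) * V (p 0)) ∧
      Tendsto p atTop (nhds pstar) := by
  set A := B⁻¹ with hAdef
  have hApos : A.PosDef := hBpos.inv
  have hAsymm : Aᵀ = A := by
    rw [hAdef, Matrix.transpose_nonsing_inv, hBsymm.eq]
  have hBunit : IsUnit B.det := hBpos.det_pos.ne'.isUnit
  have hAB : A * B = 1 := Matrix.nonsing_inv_mul B hBunit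
  have hABv : ∀ v, A.mulVec (B.mulVec v) = v := by
    intro v; rw [Matrix.mulVec_mulVec, hAB, Matrix.one_mulVec]
  set u : ℝ → Fin n → ℝ := fun t => p t - pstar with hu
  have hW : ∀ t, HasDerivAt (fun τ => V (p τ))
      ((u t) ⬝ᵥ A.mulVec (deriv p t)) t := by
    intro t
    have hup : HasDerivAt u (deriv p t) t := ((hdiff t).hasDerivAt).sub_const pstar
    have h := quad_hasDerivAt A u (deriv p t) t hup
    have heq : (fun τ => V (p τ)) = fun τ => (1/2) * (u τ ⬝ᵥ A.mulVec (u τ)) := by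
      funext τ; rw [hV]
    rw [heq]
    have h2 := h.const_mul (1/2 : ℝ)
    refine h2.congr_deriv ?_
    rw [dot_symm hAsymm (deriv p t) (u t)]
    ring
  have hkey : ∀ t : ℝ, 0 ≤ t →
      (u t) ⬝ᵥ A.mulVec (deriv p t) ≤ -2 * V (p t) := by
    intro t ht
    rw [hode t ht]
    have hstar : A.mulVec pstar = s pstar := by
      have h := congrArg A.mulVec hfix
      rw [hABv] at h
      exact h.symm
    have e1 : A.mulVec (B.mulVec (s (p t)) - p t)
        = (s (p t) - s pstar) - A.mulVec (u t) := by
      rw [Matrix.mulVec_sub, hABv, hu]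
      rw [Matrix.mulVec_sub, hstar]
      abel
    rw [e1, dotProduct_sub]
    have h1 : (u t) ⬝ᵥ (s (p t) - s pstar) ≤ 0 := by
      have h := hdec (p t) pstar
      rw [dotProduct_comm] at h
      simpa [hu] using h
    have h2 : (u t) ⬝ᵥ A.mulVec (u t) = 2 * V (p t) := by
      rw [hV]; simp only [hu]; ring
    linarith
  have hgder : ∀ t : ℝ, HasDerivAt (fun τ => Real.exp (2*τ) * V (p τ))
      (2 * Real.exp (2*t) * V (p t) + Real.exp (2*t) * ((u t) ⬝ᵥ A.mulVec (deriv p t))) t := by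
    intro t
    have he : HasDerivAt (fun τ => Real.exp (2*τ)) (2 * Real.exp (2*t)) t := by
      have h := ((hasDerivAt_id t).const_mul 2).exp
      simp only [id_eq, mul_one] at h
      convert h using 1
      ring
    exact he.mul (hW t)
  have hgdiff : Differentiable ℝ (fun τ => Real.exp (2*τ) * V (p τ)) :=
    fun t => (hgder t).differentiableAt
  have hanti : AntitoneOn (fun τ => Real.exp (2*τ) * V (p τ)) (Set.Ici 0) := by
    apply antitoneOn_of_deriv_nonpos (convex_Ici 0) hgdiff.continuous.continuousOn
      (fun x _ => (hgdiff x).differentiableWithinAt)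
    intro t ht
    rw [interior_Ici] at ht
    rw [(hgder t).deriv]
    have hb := hkey t ht.le
    nlinarith [Real.exp_pos (2*t)]
  have hdecay : ∀ t : ℝ, 0 ≤ t → V (p t) ≤ Real.exp (-2 * t) * V (p 0) := by
    intro t ht
    have h := hanti Set.self_mem_Ici ht ht
    simp only [mul_zero, Real.exp_zero, one_mul] at h
    have h2 := mul_le_mul_of_nonneg_left h (Real.exp_pos (-2*t)).le
    have h3 : Real.exp (-2*t) * Real.exp (2*t) = 1 := by
      rw [← Real.exp_add]; ring_nf; exact Real.exp_zero
    calc V (p t) = (Real.exp (-2*t) * Real.exp (2*t)) * V (p t) := by rw [h3]; ring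
      _ = Real.exp (-2*t) * (Real.exp (2*t) * V (p t)) := by ring
      _ ≤ Real.exp (-2*t) * V (p 0) := h2
  refine ⟨hdecay, ?_⟩
  obtain ⟨c, hc, hcoer⟩ := posdef_coercive hn hApos
  have hVnonneg : ∀ q, 0 ≤ V q := by
    intro q
    rw [hV]
    rcases eq_or_ne (q - pstar) 0 with h | h
    · simp [h]
    · have := hApos.dotProduct_mulVec_pos h
      simp only [star_trivial] at this
      linarith
  have hexp0 : Tendsto (fun t : ℝ => Real.exp (-2*t)) atTop (nhds 0) := by
    have h1 : Tendsto (fun t : ℝ => 2*t) atTop atTop :=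
      Tendsto.const_mul_atTop (by norm_num) tendsto_id
    exact (Real.tendsto_exp_neg_atTop_nhds_zero.comp h1).congr fun t => by
      simp [Function.comp, neg_mul]
  have hsq : Tendsto (fun t => ‖p t - pstar‖^2) atTop (nhds 0) := by
    apply squeeze_zero' (Eventually.of_forall fun t => by positivity)
      (g := fun t => (2/c) * (Real.exp (-2*t) * V (p 0)))
    · filter_upwards [eventually_ge_atTop (0:ℝ)] with t ht
      have h1 := hcoer (p t - pstar)
      have h2 : (p t - pstar) ⬝ᵥ A.mulVec (p t - pstar) = 2 * V (p t) := by
        rw [hV]; ring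
      have h3 := hdecay t ht
      rw [h2] at h1
      rw [div_mul_eq_mul_div, le_div_iff₀ hc]
      nlinarith
    · have := (hexp0.mul_const (V (p 0))).const_mul (2/c)
      simpa using this
  have hnorm : Tendsto (fun t => ‖p t - pstar‖) atTop (nhds 0) := by
    have h2 := (Real.continuous_sqrt.tendsto 0).comp hsq
    rw [Real.sqrt_zero] at h2
    exact h2.congr fun t => Real.sqrt_sq (norm_nonneg _)
  exact tendsto_iff_norm_sub_tendsto_zero.mpr hnorm
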